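/- Let M be a DFA with n ≥ 2 states accepting L, and suppose L is not subword-closed. Then there exists a witness (v, w) with v a subword of w, w ∈ L, v ∉ L, and |w| ≤ n. -/

import Mathlib

def SubwordClosed {α : Type*} (L : Set (List α)) : Prop :=
  ∀ w ∈ L, ∀ v : List α, v.Sublist w → v ∈ L

namespace NSCaux

variable {α σ : Type*}

private lemma nat_flip (P : ℕ → Prop) : ∀ N, ¬ P 0 → P N → ∃ t, t < N ∧ ¬ P t ∧ P (t + 1) := by
  intro N
  induction N with
  | zero => intro h0 hN; exact absurd hN h0
  | succ N ih =>
    intro h0 hN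
    by_cases hP : P N
    · obtain ⟨t, ht, h1, h2⟩ := ih h0 hP
      exact ⟨t, Nat.lt_succ_of_lt ht, h1, h2⟩
    · exact ⟨N, Nat.lt_succ_self N, hP, hN⟩

private lemma eval_congr (M : DFA α σ) {p₁ p₂ : List α} (h : M.eval p₁ = M.eval p₂)
    (s : List α) : M.eval (p₁ ++ s) = M.eval (p₂ ++ s) := by
  show M.evalFrom M.start _ = M.evalFrom M.start _
  rw [M.evalFrom_of_append, M.evalFrom_of_append]
  exact congrArg (fun q => M.evalFrom q s) h

private lemma flip_pair (M : DFA α σ) (X mseg Z : List α)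
    (hw : M.eval (X ++ mseg ++ Z) ∈ M.accept) (hv : M.eval (X ++ Z) ∉ M.accept) :
    ∃ t, t < mseg.length ∧ ∃ b : α,
      M.eval ((X ++ mseg.take t) ++ b :: Z) ∈ M.accept ∧
      M.eval ((X ++ mseg.take t) ++ Z) ∉ M.accept := by
  obtain ⟨t, ht, h1, h2⟩ := nat_flip (fun t => M.eval (X ++ mseg.take t ++ Z) ∈ M.accept)
    mseg.length (by simpa using hv) (by simpa using hw)
  refine ⟨t, ht, mseg[t]'ht, ?_, ?_⟩
  · have e : mseg.take (t + 1) = mseg.take t ++ [mseg[t]'ht] := by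
      have := List.take_concat_get (l := mseg) (i := t) ht
      simpa [List.concat_eq_append] using this.symm
    have h2' : M.eval (X ++ mseg.take (t + 1) ++ Z) ∈ M.accept := h2
    rw [e] at h2'
    have eq1 : X ++ (mseg.take t ++ [mseg[t]'ht]) ++ Z
        = (X ++ mseg.take t) ++ mseg[t]'ht :: Z := by
      simp only [List.append_assoc, List.singleton_append]
    rwa [eq1] at h2'
  · exact h1

private lemma del (M : DFA α σ) : ∀ {v w : List α}, v.Sublist w →
    ∀ q : σ, M.evalFrom q w ∈ M.accept → M.evalFrom q v ∉ M.accept →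
    ∃ x z : List α, ∃ a : α,
      M.evalFrom q (x ++ a :: z) ∈ M.accept ∧ M.evalFrom q (x ++ z) ∉ M.accept := by
  intro v w hsub
  induction hsub with
  | slnil => intro q hw hv; exact absurd hw hv
  | @cons l₁ l₂ b hs ih =>
    intro q hw hv
    by_cases h2 : M.evalFrom q l₂ ∈ M.accept
    · exact ih q h2 hv
    · exact ⟨[], l₂, b, by simpa using hw, by simpa using h2⟩
  | @cons_cons l₁ l₂ b hs ih =>
    intro q hw hv
    obtain ⟨x, z, a, h1, h2⟩ := ih (M.step q b)
      (by simpa [DFA.evalFrom] using hw) (by simpa [DFA.evalFrom] using hv)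
    exact ⟨b :: x, z, a, by simpa [DFA.evalFrom] using h1, by simpa [DFA.evalFrom] using h2⟩

private lemma key (M : DFA α σ) [Fintype σ] :
    ∀ N : ℕ, ∀ x z : List α, ∀ a : α,
      (x.length + z.length) ^ 2 + z.length ≤ N →
      M.eval (x ++ a :: z) ∈ M.accept → M.eval (x ++ z) ∉ M.accept →
      ∃ v w : List α, v.Sublist w ∧ w ∈ M.accepts ∧ v ∉ M.accepts ∧
        w.length ≤ Fintype.card σ := by
  intro N
  induction N using Nat.strong_induction_on with
  | _ N ih =>
    intro x z a hN hw hv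
    by_cases hinj : Function.Injective
        (fun i : Fin ((x ++ z).length + 1) => M.eval ((x ++ z).take i))
    · -- injective run: the pair (x ++ z, x ++ a :: z) is a short witness
      have hcard := Fintype.card_le_of_injective _ hinj
      rw [Fintype.card_fin] at hcard
      refine ⟨x ++ z, x ++ a :: z, (List.sublist_cons_self a z).append_left x,
        (DFA.mem_accepts M).mpr hw, fun hc => hv ((DFA.mem_accepts M).mp hc), ?_⟩
      simp only [List.length_append, List.length_cons] at hcard ⊢
      omega
    · rw [Function.not_injective_iff] at hinj
      obtain ⟨i, j, heq, hne⟩ := hinj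
      obtain ⟨p, q, hpq, hqle, hpq_eq⟩ :
          ∃ p q : ℕ, p < q ∧ q ≤ (x ++ z).length ∧
            M.eval ((x ++ z).take p) = M.eval ((x ++ z).take q) := by
        have hvne : (i : ℕ) ≠ (j : ℕ) := fun e => hne (Fin.ext e)
        rcases Nat.lt_or_ge (i : ℕ) (j : ℕ) with hlt | hge
        · exact ⟨i, j, hlt, Nat.lt_succ_iff.mp j.isLt, heq⟩
        · exact ⟨j, i, lt_of_le_of_ne hge (Ne.symm hvne), Nat.lt_succ_iff.mp i.isLt, heq.symm⟩
      have hqlen : q ≤ x.length + z.length := by simpa using hqle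
      by_cases hA : q ≤ x.length
      · -- Case A: both repeat positions in the x-part
        have hp : (x ++ z).take p = x.take p :=
          List.take_append_of_le_length (le_trans (le_of_lt hpq) hA)
        have hq : (x ++ z).take q = x.take q := List.take_append_of_le_length hA
        rw [hp, hq] at hpq_eq
        have e1 := eval_congr M hpq_eq (x.drop q ++ a :: z)
        have e2 := eval_congr M hpq_eq (x.drop q ++ z)
        rw [← List.append_assoc, ← List.append_assoc, List.take_append_drop] at e1 e2
        have hacc : M.eval ((x.take p ++ x.drop q) ++ a :: z) ∈ M.accept := by
          rw [e1]; exact hw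
        have hrej : M.eval ((x.take p ++ x.drop q) ++ z) ∉ M.accept := by
          rw [e2]; exact hv
        have hlen : (x.take p ++ x.drop q).length + z.length < x.length + z.length := by
          simp only [List.length_append, List.length_take, List.length_drop]
          omega
        have hmu : ((x.take p ++ x.drop q).length + z.length) ^ 2 + z.length < N := by
          have hsq := Nat.pow_lt_pow_left hlen (two_ne_zero)
          omega
        exact ih _ hmu _ _ _ le_rfl hacc hrej
      · push_neg at hA
        by_cases hB : x.length ≤ p
        · -- Case B: both repeat positions in the z-part
          have hp : (x ++ z).take p = x ++ z.take (p - x.length) := by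
            rw [List.take_append, List.take_of_length_le hB]
          have hq : (x ++ z).take q = x ++ z.take (q - x.length) := by
            rw [List.take_append, List.take_of_length_le (le_of_lt hA)]
          rw [hp, hq] at hpq_eq
          set i' := p - x.length with hi'
          set j' := q - x.length with hj'
          have hij' : i' < j' := by omega
          have hj'l : j' ≤ z.length := by omega
          have hj'pos : 1 ≤ j' := by omega
          by_cases hB1 : M.eval (x ++ (a :: (z.take i' ++ z.drop j'))) ∈ M.accept
          · -- direct shorter pair
            have e2 := eval_congr M hpq_eq (z.drop j')
            rw [List.append_assoc, List.append_assoc, List.take_append_drop] at e2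
            have hrej : M.eval (x ++ (z.take i' ++ z.drop j')) ∉ M.accept := by
              rw [e2]; exact hv
            have hlen : x.length + (z.take i' ++ z.drop j').length < x.length + z.length := by
              simp only [List.length_append, List.length_take, List.length_drop]
              omega
            have hzle : (z.take i' ++ z.drop j').length ≤ z.length := by
              simp only [List.length_append, List.length_take, List.length_drop]
              omega
            have hmu : (x.length + (z.take i' ++ z.drop j').length) ^ 2 +
                (z.take i' ++ z.drop j').length < N := by
              have hsq := Nat.pow_lt_pow_left hlen (two_ne_zero)
              omega
            exact ih _ hmu _ _ _ le_rfl hB1 hrej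
          · -- flip inside the deleted block
            have hXmZ : (x ++ a :: z.take i') ++ (z.take j').drop i' ++ z.drop j'
                = x ++ a :: z := by
              have h1 : z.take i' = (z.take j').take i' := by
                rw [List.take_take, min_eq_left (le_of_lt hij')]
              rw [List.append_assoc, List.append_assoc, List.cons_append,
                ← List.append_assoc, h1, List.take_append_drop, List.take_append_drop]
            have hw' : M.eval ((x ++ a :: z.take i') ++ (z.take j').drop i' ++ z.drop j')
                ∈ M.accept := by rw [hXmZ]; exact hw
            have hv' : M.eval ((x ++ a :: z.take i') ++ z.drop j') ∉ M.accept := by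
              intro hc; apply hB1
              have heq2 : (x ++ a :: z.take i') ++ z.drop j'
                  = x ++ (a :: (z.take i' ++ z.drop j')) := by
                simp [List.append_assoc]
              rwa [heq2] at hc
            obtain ⟨t, ht, b, hacc2, hrej2⟩ := flip_pair M _ _ _ hw' hv'
            have hmlen : ((z.take j').drop i').length = j' - i' := by
              simp [Nat.min_eq_left hj'l]
            have hi'l : i' ≤ z.length := by omega
            have htle : t ≤ j' - i' - 1 := by omega
            have hx2len : ((x ++ a :: z.take i') ++ ((z.take j').drop i').take t).length
                = x.length + 1 + i' + t := by
              simp [Nat.min_eq_left hi'l, hmlen, Nat.min_eq_left (le_of_lt (hmlen ▸ ht))]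
              omega
            have hz2len : (z.drop j').length = z.length - j' := List.length_drop
            have hlen : ((x ++ a :: z.take i') ++ ((z.take j').drop i').take t).length +
                (z.drop j').length ≤ x.length + z.length := by
              rw [hx2len, hz2len]; omega
            have hmu : (((x ++ a :: z.take i') ++ ((z.take j').drop i').take t).length +
                (z.drop j').length) ^ 2 + (z.drop j').length < N := by
              have hsq := Nat.pow_le_pow_left hlen 2
              rw [hz2len] at *
              omega
            exact ih _ hmu _ _ _ le_rfl hacc2 hrej2
        · -- Case C: repeat positions straddle the deleted letter
          push_neg at hB
          have hp : (x ++ z).take p = x.take p :=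
            List.take_append_of_le_length (le_of_lt hB)
          have hq : (x ++ z).take q = x ++ z.take (q - x.length) := by
            rw [List.take_append, List.take_of_length_le (le_of_lt hA)]
          rw [hp, hq] at hpq_eq
          set j' := q - x.length with hj'
          have hj'l : j' ≤ z.length := by omega
          have hj'pos : 1 ≤ j' := by omega
          have e2 := eval_congr M hpq_eq (z.drop j')
          rw [List.append_assoc, List.take_append_drop] at e2
          have hv' : M.eval (x.take p ++ z.drop j') ∉ M.accept := by
            rw [e2]; exact hv
          have hXmZ : x.take p ++ (x.drop p ++ a :: z.take j') ++ z.drop j'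
              = x ++ a :: z := by
            simp only [List.append_assoc, List.cons_append]
            rw [List.take_append_drop, ← List.append_assoc, List.take_append_drop]
          have hw' : M.eval (x.take p ++ (x.drop p ++ a :: z.take j') ++ z.drop j')
              ∈ M.accept := by rw [hXmZ]; exact hw
          obtain ⟨t, ht, b, hacc2, hrej2⟩ := flip_pair M _ _ _ hw' hv'
          have hmlen : (x.drop p ++ a :: z.take j').length = x.length - p + 1 + j' := by
            simp [Nat.min_eq_left hj'l]
            omega
          have e1' : (x.take p).length = p := by
            rw [List.length_take, Nat.min_eq_left (le_of_lt hB)]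
          have e2' : ((x.drop p ++ a :: z.take j').take t).length = t := by
            rw [List.length_take, Nat.min_eq_left (le_of_lt ht)]
          have hx2len : (x.take p ++ (x.drop p ++ a :: z.take j').take t).length
              = p + t := by
            simp only [List.length_append, e1', e2']
          have hz2len : (z.drop j').length = z.length - j' := List.length_drop
          have hlen : (x.take p ++ (x.drop p ++ a :: z.take j').take t).length +
              (z.drop j').length ≤ x.length + z.length := by
            rw [hx2len, hz2len]
            have ht' : t < x.length - p + 1 + j' := by rwa [hmlen] at ht
            omega
          have hmu : ((x.take p ++ (x.drop p ++ a :: z.take j').take t).length +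
              (z.drop j').length) ^ 2 + (z.drop j').length < N := by
            have hsq := Nat.pow_le_pow_left hlen 2
            rw [hz2len] at *
            omega
          exact ih _ hmu _ _ _ le_rfl hacc2 hrej2

end NSCaux

theorem nonSubwordClosed_short_witness {α σ : Type*} [Fintype σ] (M : DFA α σ) (n : ℕ)
    (hn : Fintype.card σ = n) (h2 : 2 ≤ n) (h : ¬ SubwordClosed M.accepts) :
    ∃ v w : List α, v.Sublist w ∧ w ∈ M.accepts ∧ v ∉ M.accepts ∧ w.length ≤ n := by
  simp only [SubwordClosed] at h
  push_neg at h
  obtain ⟨w, hwL, v, hsub, hvL⟩ := h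
  obtain ⟨x, z, a, h1, h2'⟩ := NSCaux.del M hsub M.start
    ((DFA.mem_accepts M).mp hwL) (fun hc => hvL ((DFA.mem_accepts M).mpr hc))
  subst hn
  exact NSCaux.key M ((x.length + z.length) ^ 2 + z.length) x z a le_rfl h1 h2'
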